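/- For all positive reals a, b, g, and P > 0, log₂(1 + max{1, b/g}·(g + a)·P) − (1/2)·log₂(1 + 2·a·P) − (1/2)·log₂(1 + 2·b·P) ≤ log₂(3/2) + (1/2)·|log₂(b/g)| + (1/2)·|log₂(a/g)|. -/

import Mathlib

open Real

section EiaAux

private theorem eia_keyA (s t q : ℝ) (hs0 : 0 < s) (ht0 : 0 < t) (hq0 : 0 < q)
    (hs1 : s ≤ 1) (ht1 : t ≤ 1) :
    s * t * (1 + 1 * (q * (1 + t))) ^ 2
      ≤ 9 / 4 * ((1 + 2 * (t * q)) * (1 + 2 * (s * q))) := by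
  have hA : 0 ≤ q * ((9/2)*(s+t) - 2*s*t*(1+t)) := by
    have h : 0 ≤ (9/2)*(s+t) - 2*s*t*(1+t) := by
      nlinarith [mul_nonneg hs0.le (sub_nonneg.2 ht1),
        mul_nonneg ht0.le (sub_nonneg.2 hs1),
        mul_nonneg (mul_nonneg hs0.le ht0.le) (sub_nonneg.2 ht1)]
    exact mul_nonneg hq0.le h
  have hB : 0 ≤ (q*q) * (s*t*(9 - (1+t)^2)) := by
    have h : 0 ≤ s*t*(9 - (1+t)^2) :=
      mul_nonneg (mul_nonneg hs0.le ht0.le) (by nlinarith)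
    positivity
  nlinarith [mul_pos hs0 ht0]

private theorem eia_keyB (s t q : ℝ) (hs0 : 0 < s) (ht0 : 0 < t) (hq0 : 0 < q)
    (hs1 : s ≤ 1) (ht1 : 1 ≤ t) :
    s * (1 + 1 * (q * (1 + t))) ^ 2
      ≤ 9 / 4 * ((t * ((1 + 2 * (t * q)) * (1 + 2 * (s * q))))) := by
  have hL2 : 1 + 1 * (q * (1 + t)) ≤ 1 + 2*(t*q) := by
    nlinarith [mul_nonneg hq0.le (sub_nonneg.2 ht1)]
  have h1 : s * (1 + 1 * (q * (1 + t)))^2 ≤ s * (1 + 2*(t*q))^2 := by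
    have := pow_le_pow_left₀ (by positivity) hL2 2
    nlinarith
  have h5 : s*(1+2*(t*q)) ≤ (9/4)*(t*(1+2*(s*q))) := by
    nlinarith [mul_nonneg (mul_nonneg hs0.le ht0.le) hq0.le]
  have h6 : s * (1 + 2*(t*q))^2 ≤ (9/4)*(t*(1+2*(s*q))) * (1+2*(t*q)) := by
    have := mul_le_mul_of_nonneg_right h5 (by positivity : (0:ℝ) ≤ 1 + 2*(t*q))
    nlinarith
  nlinarith

private theorem eia_keyC (s t q : ℝ) (hs0 : 0 < s) (ht0 : 0 < t) (hq0 : 0 < q)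
    (hs1 : 1 ≤ s) (ht1 : t ≤ 1) :
    t * (1 + s * (q * (1 + t))) ^ 2
      ≤ 9 / 4 * ((s * ((1 + 2 * (t * q)) * (1 + 2 * (s * q))))) := by
  have hL2 : 1 + s * (q * (1 + t)) ≤ 1 + 2*(s*q) := by
    nlinarith [mul_nonneg (mul_nonneg hs0.le hq0.le) (sub_nonneg.2 ht1)]
  have h1 : t * (1 + s * (q * (1 + t)))^2 ≤ t * (1 + 2*(s*q))^2 := by
    have := pow_le_pow_left₀ (by positivity) hL2 2
    nlinarith
  have h5 : t*(1+2*(s*q)) ≤ (9/4)*(s*(1+2*(t*q))) := by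
    nlinarith [mul_nonneg (mul_nonneg hs0.le ht0.le) hq0.le]
  have h6 : t * (1 + 2*(s*q))^2 ≤ (9/4)*(s*(1+2*(t*q))) * (1+2*(s*q)) := by
    have := mul_le_mul_of_nonneg_right h5 (by positivity : (0:ℝ) ≤ 1 + 2*(s*q))
    nlinarith
  nlinarith

private theorem eia_keyD (s t q : ℝ) (hs0 : 0 < s) (ht0 : 0 < t) (hq0 : 0 < q)
    (hs1 : 1 ≤ s) (ht1 : 1 ≤ t) :
    (1 + s * (q * (1 + t))) ^ 2
      ≤ 9 / 4 * (s * (t * ((1 + 2 * (t * q)) * (1 + 2 * (s * q))))) := by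
  have hL2 : 1 + s * (q * (1 + t)) ≤ 1 + 2*(s*t*q) := by
    nlinarith [mul_nonneg (mul_nonneg hs0.le hq0.le) (sub_nonneg.2 ht1)]
  have h1 : (1 + s * (q * (1 + t)))^2 ≤ (1 + 2*(s*t*q))^2 :=
    pow_le_pow_left₀ (by positivity) hL2 2
  have hst : 1 ≤ s*t := by nlinarith
  have hA : 0 ≤ (s*t*q) * (s + t - 2) :=
    mul_nonneg (by positivity) (by linarith)
  nlinarith [mul_pos (mul_pos hs0 ht0) hq0, sq_nonneg (s*t*q), hst, hA, h1]

private theorem eia_abs_logb_two (x : ℝ) (hx : 0 < x) :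
    |Real.logb 2 x| = Real.logb 2 (max x x⁻¹) := by
  rcases le_total x 1 with h | h
  · rw [abs_of_nonpos (Real.logb_nonpos one_lt_two hx.le h),
      max_eq_right (le_trans h (one_le_inv_iff₀.mpr ⟨hx, h⟩)), Real.logb_inv]
  · rw [abs_of_nonneg (Real.logb_nonneg one_lt_two h),
      max_eq_left (le_trans (inv_le_one_of_one_le₀ h) h)]

end EiaAux

/-- Per-pair gap bound for ergodic interference alignment on the fading interference
channel: uniform in `P`. -/
theorem eia_per_pair_gap (a b g P : ℝ) (ha : 0 < a) (hb : 0 < b) (hg : 0 < g)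
    (hP : 0 < P) :
    Real.logb 2 (1 + max 1 (b / g) * (g + a) * P) -
        (1 / 2) * Real.logb 2 (1 + 2 * a * P) - (1 / 2) * Real.logb 2 (1 + 2 * b * P) ≤
      Real.logb 2 (3 / 2) + (1 / 2) * |Real.logb 2 (b / g)| +
        (1 / 2) * |Real.logb 2 (a / g)| := by
  have hg' : g ≠ 0 := hg.ne'
  set s := b / g with hs
  set t := a / g with ht
  set q := g * P with hq
  have hs0 : 0 < s := div_pos hb hg
  have ht0 : 0 < t := div_pos ha hg
  have hq0 : 0 < q := mul_pos hg hP
  have hbP : 2 * b * P = 2 * (s * q) := by field_simp [hs, hq]; rw [hs, hq]; field_simp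
  have haP : 2 * a * P = 2 * (t * q) := by field_simp [ht, hq]; rw [ht, hq]; field_simp
  have hga : max 1 s * (g + a) * P = max 1 s * (q * (1 + t)) := by
    rw [mul_assoc]
    congr 1
    field_simp [ht, hq]; rw [ht, hq]; field_simp
  rw [hbP, haP, hga, eia_abs_logb_two s hs0, eia_abs_logb_two t ht0]
  have hm : (0:ℝ) < max 1 s := lt_max_of_lt_left one_pos
  have hL0 : 0 < 1 + max 1 s * (q * (1 + t)) :=
    add_pos one_pos (mul_pos hm (by positivity))
  have hX0 : (0:ℝ) < 1 + 2 * (t * q) := by positivity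
  have hY0 : (0:ℝ) < 1 + 2 * (s * q) := by positivity
  have hMs0 : 0 < max s s⁻¹ := lt_max_of_lt_left hs0
  have hMt0 : 0 < max t t⁻¹ := lt_max_of_lt_left ht0
  have key : (1 + max 1 s * (q * (1 + t))) ^ 2 ≤
      9 / 4 * (max s s⁻¹ * (max t t⁻¹ * ((1 + 2 * (t * q)) * (1 + 2 * (s * q))))) := by
    rcases le_total s 1 with hs1 | hs1 <;> rcases le_total t 1 with ht1 | ht1
    · rw [max_eq_left hs1, max_eq_right (le_trans hs1 (one_le_inv_iff₀.mpr ⟨hs0, hs1⟩)),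
        max_eq_right (le_trans ht1 (one_le_inv_iff₀.mpr ⟨ht0, ht1⟩))]
      calc (1 + 1 * (q * (1 + t))) ^ 2
          = (s * t)⁻¹ * (s * t * (1 + 1 * (q * (1 + t))) ^ 2) :=
            (inv_mul_cancel_left₀ (by positivity) _).symm
        _ ≤ (s * t)⁻¹ * (9 / 4 * ((1 + 2 * (t * q)) * (1 + 2 * (s * q)))) :=
            mul_le_mul_of_nonneg_left (eia_keyA s t q hs0 ht0 hq0 hs1 ht1) (by positivity)
        _ = 9 / 4 * (s⁻¹ * (t⁻¹ * ((1 + 2 * (t * q)) * (1 + 2 * (s * q))))) := by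
            rw [mul_inv]; ring
    · rw [max_eq_left hs1, max_eq_right (le_trans hs1 (one_le_inv_iff₀.mpr ⟨hs0, hs1⟩)),
        max_eq_left (le_trans (inv_le_one_of_one_le₀ ht1) ht1)]
      calc (1 + 1 * (q * (1 + t))) ^ 2
          = s⁻¹ * (s * (1 + 1 * (q * (1 + t))) ^ 2) :=
            (inv_mul_cancel_left₀ hs0.ne' _).symm
        _ ≤ s⁻¹ * (9 / 4 * (t * ((1 + 2 * (t * q)) * (1 + 2 * (s * q))))) :=
            mul_le_mul_of_nonneg_left (eia_keyB s t q hs0 ht0 hq0 hs1 ht1) (by positivity)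
        _ = 9 / 4 * (s⁻¹ * (t * ((1 + 2 * (t * q)) * (1 + 2 * (s * q))))) := by ring
    · rw [max_eq_right hs1, max_eq_left (le_trans (inv_le_one_of_one_le₀ hs1) hs1),
        max_eq_right (le_trans ht1 (one_le_inv_iff₀.mpr ⟨ht0, ht1⟩))]
      calc (1 + s * (q * (1 + t))) ^ 2
          = t⁻¹ * (t * (1 + s * (q * (1 + t))) ^ 2) :=
            (inv_mul_cancel_left₀ ht0.ne' _).symm
        _ ≤ t⁻¹ * (9 / 4 * (s * ((1 + 2 * (t * q)) * (1 + 2 * (s * q))))) :=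
            mul_le_mul_of_nonneg_left (eia_keyC s t q hs0 ht0 hq0 hs1 ht1) (by positivity)
        _ = 9 / 4 * (s * (t⁻¹ * ((1 + 2 * (t * q)) * (1 + 2 * (s * q))))) := by ring
    · rw [max_eq_right hs1, max_eq_left (le_trans (inv_le_one_of_one_le₀ hs1) hs1),
        max_eq_left (le_trans (inv_le_one_of_one_le₀ ht1) ht1)]
      exact eia_keyD s t q hs0 ht0 hq0 hs1 ht1
  have hlog : Real.logb 2 ((1 + max 1 s * (q * (1 + t))) ^ 2) ≤
      Real.logb 2 (9 / 4 * (max s s⁻¹ * (max t t⁻¹ *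
        ((1 + 2 * (t * q)) * (1 + 2 * (s * q)))))) :=
    (Real.logb_le_logb one_lt_two (by positivity) (by positivity)).mpr key
  rw [Real.logb_pow] at hlog
  rw [Real.logb_mul (by norm_num) (by positivity), Real.logb_mul hMs0.ne' (by positivity),
    Real.logb_mul hMt0.ne' (by positivity), Real.logb_mul hX0.ne' hY0.ne',
    show (9 : ℝ) / 4 = (3 / 2) ^ 2 by norm_num, Real.logb_pow] at hlog
  push_cast at hlog
  linarith
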